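/- For every δ ∈ (0,1) there exists a Lipschitz function f : (0,1) → ℝ, an open dense set D ⊆ (0,1) on which f is continuously differentiable with f'(q) = 1 for all q ∈ D, and a point z ∈ (0,1) \ D and ε > 0 such that f'(z) exists and equals 0, while the closed convex hull of f'((z-ε, z+ε) ∩ D) equals {1}; hence the Clarke subdifferential ∂̄f(z) (which contains 0) is not contained in cl conv f'(B(z,ε) ∩ D). -/

import Mathlib

open Filter MeasureTheory

/-- The Clarke subdifferential of `f : ℝ → ℝ` at `x`: the convex hull of all limits of
derivatives along sequences of differentiability points converging to `x`. -/
noncomputable def clarkeSubdiffReal (f : ℝ → ℝ) (x : ℝ) : Set ℝ :=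
  convexHull ℝ { v | ∃ y : ℕ → ℝ,
    Tendsto y atTop (nhds x) ∧ (∀ j, DifferentiableAt ℝ f (y j)) ∧
    Tendsto (fun j => deriv f (y j)) atTop (nhds v) }

namespace ClarkeCE

noncomputable def c (k : ℕ) : ℝ := (((Denumerable.eqv ℚ).symm k : ℚ) : ℝ)

noncomputable def U : Set ℝ :=
  ⋃ k : ℕ, Set.Ioo (c k - (4:ℝ)⁻¹ ^ (k+1)) (c k + (4:ℝ)⁻¹ ^ (k+1))

noncomputable def D : Set ℝ := Set.Ioo 0 1 ∩ U

noncomputable def f (x : ℝ) : ℝ := (volume (D ∩ Set.Ioc 0 x)).toReal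

lemma isOpen_U : IsOpen U := isOpen_iUnion fun _ => isOpen_Ioo

lemma isOpen_D : IsOpen D := isOpen_Ioo.inter isOpen_U

lemma D_subset : D ⊆ Set.Ioo (0:ℝ) 1 := Set.inter_subset_left

lemma measurable_D : MeasurableSet D := isOpen_D.measurableSet

lemma rat_mem_D {q : ℚ} (hq : (q:ℝ) ∈ Set.Ioo (0:ℝ) 1) : (q:ℝ) ∈ D := by
  refine ⟨hq, ?_⟩
  refine Set.mem_iUnion.2 ⟨Denumerable.eqv ℚ q, ?_⟩
  set k := Denumerable.eqv ℚ q with hk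
  have hck : c k = (q:ℝ) := by
    rw [c, hk, Equiv.symm_apply_apply]
  have hpos : (0:ℝ) < (4:ℝ)⁻¹ ^ (k+1) := by positivity
  constructor <;> rw [hck] <;> linarith

lemma dense_D : Set.Ioo (0:ℝ) 1 ⊆ closure D := by
  have h := Rat.denseRange_cast (𝕜 := ℝ)
  have h2 : Set.Ioo (0:ℝ) 1 ⊆ closure (Set.Ioo (0:ℝ) 1 ∩ Set.range ((↑) : ℚ → ℝ)) :=
    h.open_subset_closure_inter isOpen_Ioo
  refine h2.trans (closure_mono ?_)
  rintro x ⟨hx, q, rfl⟩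
  exact rat_mem_D hx

lemma vol_D_lt_one : volume D < 1 := by
  have hle : volume D ≤ volume U := measure_mono Set.inter_subset_right
  have hU : volume U ≤ ENNReal.ofReal (2/3) := by
    refine (measure_iUnion_le _).trans ?_
    have h1 : ∀ k : ℕ, volume (Set.Ioo (c k - (4:ℝ)⁻¹ ^ (k+1)) (c k + (4:ℝ)⁻¹ ^ (k+1)))
        = ENNReal.ofReal (2 * (4:ℝ)⁻¹ ^ (k+1)) := by
      intro k; rw [Real.volume_Ioo]; ring_nf
    simp only [h1]
    have hsumm : Summable (fun k : ℕ => 2 * (4:ℝ)⁻¹ ^ (k+1)) := by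
      apply Summable.mul_left
      exact (summable_geometric_of_lt_one (by norm_num) (by norm_num)).comp_injective
        (add_left_injective 1)
    rw [← ENNReal.ofReal_tsum_of_nonneg (fun k => by positivity) hsumm]
    apply ENNReal.ofReal_le_ofReal
    rw [tsum_mul_left]
    have : ∑' k : ℕ, (4:ℝ)⁻¹ ^ (k+1) = (4:ℝ)⁻¹ * (1 - 4⁻¹)⁻¹ := by
      simp only [pow_succ, mul_comm]
      rw [tsum_mul_left, tsum_geometric_of_lt_one (by norm_num) (by norm_num)]
    rw [this]; norm_num
  calc volume D ≤ ENNReal.ofReal (2/3) := hle.trans hU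
    _ < 1 := by
        rw [show (1:ENNReal) = ENNReal.ofReal 1 by simp]
        exact ENNReal.ofReal_lt_ofReal_iff_of_nonneg (by norm_num) |>.2 (by norm_num)

lemma vol_D_ne_top : volume D ≠ ⊤ := vol_D_lt_one.ne_top

lemma vol_fin (s : Set ℝ) : volume (D ∩ s) ≠ ⊤ :=
  (lt_of_le_of_lt (measure_mono Set.inter_subset_left) vol_D_lt_one).ne_top

lemma f_sub {y x : ℝ} (h0 : 0 ≤ y) (h : y ≤ x) :
    f x = f y + (volume (D ∩ Set.Ioc y x)).toReal := by
  have hsplit : D ∩ Set.Ioc 0 x = (D ∩ Set.Ioc 0 y) ∪ (D ∩ Set.Ioc y x) := by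
    rw [← Set.inter_union_distrib_left, Set.Ioc_union_Ioc_eq_Ioc h0 h]
  have hdisj : Disjoint (D ∩ Set.Ioc 0 y) (D ∩ Set.Ioc y x) := by
    apply Set.disjoint_left.2
    rintro t ⟨-, ht1⟩ ⟨-, ht2⟩
    exact absurd ht2.1 (not_lt.2 ht1.2)
  rw [f, f, hsplit, measure_union hdisj (measurable_D.inter measurableSet_Ioc),
    ENNReal.toReal_add (vol_fin _) (vol_fin _)]

lemma f_mono_bound {y x : ℝ} (h0 : 0 ≤ y) (h : y ≤ x) :
    f x - f y = (volume (D ∩ Set.Ioc y x)).toReal ∧ 0 ≤ f x - f y ∧ f x - f y ≤ x - y := by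
  have h1 := f_sub h0 h
  refine ⟨by linarith, by rw [show f x - f y = _ from by linarith]; positivity, ?_⟩
  have h2 : volume (D ∩ Set.Ioc y x) ≤ ENNReal.ofReal (x - y) := by
    refine (measure_mono Set.inter_subset_right).trans ?_
    rw [Real.volume_Ioc]
  have h3 : (volume (D ∩ Set.Ioc y x)).toReal ≤ x - y := by
    refine (ENNReal.toReal_le_of_le_ofReal (by linarith) h2)
  linarith

lemma lipschitz_f : LipschitzOnWith 1 f (Set.Ioo (0:ℝ) 1) := by
  rw [lipschitzOnWith_iff_dist_le_mul]
  have key : ∀ x ∈ Set.Ioo (0:ℝ) 1, ∀ y ∈ Set.Ioo (0:ℝ) 1, y ≤ x →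
      dist (f x) (f y) ≤ dist x y := by
    intro x hx y hy hyx
    obtain ⟨-, h0, h1⟩ := f_mono_bound hy.1.le hyx
    rw [Real.dist_eq, Real.dist_eq, abs_of_nonneg h0, abs_of_nonneg (by linarith)]
    exact h1
  intro x hx y hy
  rcases le_total y x with h | h
  · simpa using key x hx y hy h
  · rw [dist_comm (f x), dist_comm x]
    simpa using key y hy x hx h

lemma hasDerivAt_one {q : ℝ} (hq : q ∈ D) : HasDerivAt f 1 q := by
  obtain ⟨r, hr, hball⟩ := Metric.isOpen_iff.1 isOpen_D q hq
  have haff : HasDerivAt (fun x : ℝ => x - q + f q) 1 q := by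
    simpa using ((hasDerivAt_id q).sub_const q).add_const (f q)
  refine haff.congr_of_eventuallyEq ?_
  filter_upwards [Metric.ball_mem_nhds q hr] with x hx
  have hx0 : (0:ℝ) < x := (D_subset (hball hx)).1
  have hq0 : (0:ℝ) < q := (D_subset hq).1
  rcases le_total q x with h | h
  · have hsub : Set.Ioc q x ⊆ D := by
      intro t ht
      apply hball
      rw [Metric.mem_ball, Real.dist_eq, abs_of_pos (by linarith [ht.1])]
      have := Metric.mem_ball.1 hx
      rw [Real.dist_eq, abs_of_nonneg (by linarith)] at this
      linarith [ht.2]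
    have : D ∩ Set.Ioc q x = Set.Ioc q x := Set.inter_eq_self_of_subset_right hsub
    rw [f_sub hq0.le h, this, Real.volume_Ioc, ENNReal.toReal_ofReal (by linarith)]
    ring
  · have hsub : Set.Ioc x q ⊆ D := by
      intro t ht
      apply hball
      rw [Metric.mem_ball, Real.dist_eq, abs_of_nonpos (by linarith [ht.2])]
      have := Metric.mem_ball.1 hx
      rw [Real.dist_eq, abs_of_nonpos (by linarith)] at this
      linarith [ht.1]
    have heq : D ∩ Set.Ioc x q = Set.Ioc x q := Set.inter_eq_self_of_subset_right hsub
    have := f_sub hx0.le h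
    rw [heq, Real.volume_Ioc, ENNReal.toReal_ofReal (by linarith)] at this
    have : f x = f q - (q - x) := by linarith
    rw [this]; ring

lemma exists_density_point : ∃ z, z ∈ Set.Ioo (0:ℝ) 1 \ D ∧
    Tendsto (fun r => volume (D ∩ Metric.closedBall z r) / volume (Metric.closedBall z r))
      (nhdsWithin 0 (Set.Ioi 0)) (nhds 0) := by
  have hae := Besicovitch.ae_tendsto_measure_inter_div_of_measurableSet volume measurable_D
  have hS : volume (Set.Ioo (0:ℝ) 1 \ D) ≠ 0 := by
    have h1 : volume (Set.Ioo (0:ℝ) 1 \ D) = 1 - volume D := by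
      rw [measure_diff D_subset measurable_D.nullMeasurableSet vol_D_ne_top, Real.volume_Ioo]
      norm_num
    rw [h1]
    simp only [ne_eq, tsub_eq_zero_iff_le, not_le]
    exact vol_D_lt_one
  obtain ⟨z, hz, htend⟩ := Measure.exists_mem_of_measure_ne_zero_of_ae hS (ae_restrict_of_ae hae)
  refine ⟨z, hz, ?_⟩
  have : D.indicator (1 : ℝ → ENNReal) z = 0 := Set.indicator_of_notMem hz.2 _
  rwa [this] at htend

lemma hasDerivAt_zero {z : ℝ} (hz : z ∈ Set.Ioo (0:ℝ) 1 \ D)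
    (htend : Tendsto (fun r => volume (D ∩ Metric.closedBall z r) / volume (Metric.closedBall z r))
      (nhdsWithin 0 (Set.Ioi 0)) (nhds 0)) : HasDerivAt f 0 z := by
  -- step 1: toReal ratio
  have h1 : Tendsto (fun r => (volume (D ∩ Metric.closedBall z r)).toReal / r)
      (nhdsWithin 0 (Set.Ioi 0)) (nhds 0) := by
    have h2 := (ENNReal.tendsto_toReal (by norm_num : (0:ENNReal) ≠ ⊤)).comp htend
    rw [ENNReal.toReal_zero] at h2
    have h3 := h2.const_mul (2:ℝ)
    rw [mul_zero] at h3
    refine h3.congr' ?_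
    filter_upwards [self_mem_nhdsWithin] with r (hr : 0 < r)
    have hcb : volume (Metric.closedBall z r) = ENNReal.ofReal (2 * r) :=
      Real.volume_closedBall z r
    have : ((volume (D ∩ Metric.closedBall z r) / volume (Metric.closedBall z r)).toReal)
        = (volume (D ∩ Metric.closedBall z r)).toReal / (2 * r) := by
      rw [ENNReal.toReal_div, hcb, ENNReal.toReal_ofReal (by linarith)]
    simp only [Function.comp_apply, this]
    field_simp
  -- step 2: extend to Ici
  have h4 : Tendsto (fun r => r⁻¹ * (volume (D ∩ Metric.closedBall z r)).toReal)
      (nhdsWithin 0 (Set.Ici 0)) (nhds 0) := by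
    have hIci : Set.Ici (0:ℝ) = {0} ∪ Set.Ioi 0 := by
      ext t; simp [le_iff_lt_or_eq, or_comm, eq_comm]
    rw [hIci, nhdsWithin_union, tendsto_sup]
    constructor
    · rw [nhdsWithin_singleton]
      have hval : (fun r => r⁻¹ * (volume (D ∩ Metric.closedBall z r)).toReal) 0 = 0 := by
        have : D ∩ Metric.closedBall z 0 = ∅ := by
          rw [Metric.closedBall_zero]
          exact Set.inter_singleton_eq_empty.2 hz.2
        simp [this]
      simpa [hval] using
        tendsto_pure_nhds (fun r => r⁻¹ * (volume (D ∩ Metric.closedBall z r)).toReal) 0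
    · refine h1.congr ?_
      intro r; rw [div_eq_inv_mul]
  -- step 3: squeeze
  rw [hasDerivAt_iff_tendsto]
  simp only [smul_zero, sub_zero]
  have hinner : Tendsto (fun x : ℝ => ‖x - z‖) (nhds z) (nhdsWithin 0 (Set.Ici 0)) := by
    apply tendsto_nhdsWithin_of_tendsto_nhds_of_eventually_within
    · have h5 : Tendsto (fun x : ℝ => x - z) (nhds z) (nhds (z - z)) :=
        (continuous_id.sub continuous_const).tendsto z
      rw [sub_self] at h5
      simpa using h5.norm
    · exact Eventually.of_forall fun x => norm_nonneg _
  have hψ : Tendsto (fun x : ℝ =>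
      ‖x - z‖⁻¹ * (volume (D ∩ Metric.closedBall z ‖x - z‖)).toReal) (nhds z) (nhds 0) :=
    h4.comp hinner
  refine tendsto_of_tendsto_of_tendsto_of_le_of_le' tendsto_const_nhds hψ ?_ ?_
  · exact Eventually.of_forall fun x => by positivity
  · filter_upwards [isOpen_Ioo.mem_nhds hz.1] with x hx
    have hb : ‖f x - f z‖ ≤ (volume (D ∩ Metric.closedBall z ‖x - z‖)).toReal := by
      rcases le_total z x with h | h
      · obtain ⟨heq, h0, -⟩ := f_mono_bound hz.1.1.le h
        rw [Real.norm_eq_abs, abs_of_nonneg h0, heq]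
        apply ENNReal.toReal_le_toReal (vol_fin _) (vol_fin _) |>.2
        apply measure_mono
        apply Set.inter_subset_inter_right
        intro t ht
        rw [Metric.mem_closedBall, Real.dist_eq, Real.norm_eq_abs,
          abs_of_nonneg (by linarith : (0:ℝ) ≤ x - z), abs_of_pos (by linarith [ht.1])]
        linarith [ht.2]
      · obtain ⟨heq, h0, -⟩ := f_mono_bound hx.1.le h
        rw [Real.norm_eq_abs, abs_sub_comm, abs_of_nonneg h0, heq]
        apply ENNReal.toReal_le_toReal (vol_fin _) (vol_fin _) |>.2
        apply measure_mono
        apply Set.inter_subset_inter_right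
        intro t ht
        rw [Metric.mem_closedBall, Real.dist_eq, Real.norm_eq_abs,
          abs_of_nonpos (by linarith : x - z ≤ 0), abs_of_nonpos (by linarith [ht.2])]
        linarith [ht.1]
    exact mul_le_mul_of_nonneg_left hb (by positivity)

end ClarkeCE

theorem counterexample_dense_not_full_measure (δ : ℝ) (hδ : δ ∈ Set.Ioo (0:ℝ) 1) :
    ∃ (f : ℝ → ℝ) (D : Set ℝ) (z ε : ℝ),
      LipschitzOnWith 1 f (Set.Ioo (0:ℝ) 1) ∧
      IsOpen D ∧ D ⊆ Set.Ioo (0:ℝ) 1 ∧ Set.Ioo (0:ℝ) 1 ⊆ closure D ∧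
      (∀ q ∈ D, HasDerivAt f 1 q) ∧
      z ∈ Set.Ioo (0:ℝ) 1 \ D ∧ 0 < ε ∧
      HasDerivAt f 0 z ∧
      closure (convexHull ℝ (deriv f '' (Set.Ioo (z - ε) (z + ε) ∩ D))) = {1} ∧
      (0 : ℝ) ∈ clarkeSubdiffReal f z ∧
      ¬ clarkeSubdiffReal f z ⊆
          closure (convexHull ℝ (deriv f '' (Metric.closedBall z ε ∩ D))) := by
  obtain ⟨z, hz, htend⟩ := ClarkeCE.exists_density_point
  have hd0 : HasDerivAt ClarkeCE.f 0 z := ClarkeCE.hasDerivAt_zero hz htend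
  have hderiv1 : ∀ q ∈ ClarkeCE.D, deriv ClarkeCE.f q = 1 :=
    fun q hq => (ClarkeCE.hasDerivAt_one hq).deriv
  refine ⟨ClarkeCE.f, ClarkeCE.D, z, z, ClarkeCE.lipschitz_f, ClarkeCE.isOpen_D,
    ClarkeCE.D_subset, ClarkeCE.dense_D, fun q hq => ClarkeCE.hasDerivAt_one hq, hz,
    hz.1.1, hd0, ?_, ?_, ?_⟩
  · -- closure convexHull = {1}
    have himg : deriv ClarkeCE.f '' (Set.Ioo (z - z) (z + z) ∩ ClarkeCE.D) = {1} := by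
      apply Set.eq_singleton_iff_nonempty_unique_mem.2
      constructor
      · obtain ⟨q, hq1, hq2⟩ := exists_rat_btwn hz.1.1
        refine ⟨deriv ClarkeCE.f q, Set.mem_image_of_mem _ ⟨⟨by linarith, by linarith⟩, ?_⟩⟩
        exact ClarkeCE.rat_mem_D ⟨hq1, hq2.trans hz.1.2⟩
      · rintro v ⟨q, ⟨-, hqD⟩, rfl⟩
        exact hderiv1 q hqD
    rw [himg, convexHull_singleton, closure_singleton]
  · -- 0 ∈ Clarke subdifferential
    apply subset_convexHull ℝ _
    exact ⟨fun _ => z, tendsto_const_nhds, fun _ => hd0.differentiableAt,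
      by simpa [hd0.deriv] using (tendsto_const_nhds : Tendsto (fun _ : ℕ => (0:ℝ)) atTop (nhds 0))⟩
  · -- not a subset
    intro hsub
    have h0mem : (0:ℝ) ∈ clarkeSubdiffReal ClarkeCE.f z := by
      apply subset_convexHull ℝ _
      exact ⟨fun _ => z, tendsto_const_nhds, fun _ => hd0.differentiableAt,
        by simpa [hd0.deriv] using
          (tendsto_const_nhds : Tendsto (fun _ : ℕ => (0:ℝ)) atTop (nhds 0))⟩
    have hsubset : closure (convexHull ℝ
        (deriv ClarkeCE.f '' (Metric.closedBall z z ∩ ClarkeCE.D))) ⊆ {1} := by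
      have himg : deriv ClarkeCE.f '' (Metric.closedBall z z ∩ ClarkeCE.D) ⊆ {1} := by
        rintro v ⟨q, ⟨-, hqD⟩, rfl⟩
        exact hderiv1 q hqD
      calc closure (convexHull ℝ (deriv ClarkeCE.f '' (Metric.closedBall z z ∩ ClarkeCE.D)))
          ⊆ closure (convexHull ℝ {1}) := closure_mono (convexHull_mono himg)
        _ = {1} := by rw [convexHull_singleton, closure_singleton]
    have := hsubset (hsub h0mem)
    simp at this
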